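/- Let (X,T) be a system admitting minimal subsystems X_i (i ∈ ℕ) whose union is dense in X, such that each (X_i,T) is disjoint from (X,T). Then for every x ∈ X, the orbit closure satisfies cl O(x,T) × cl O(x,T) ⊆ Q(X), where Q(X) is the regionally proximal relation; consequently the maximal equicontinuous factor of (X,T) consists solely of fixed points. -/

import Mathlib

open Set Filter TopologicalSpace

/-- The `n`-th iterate (n ∈ ℤ) of a homeomorphism. -/
def hIter {X : Type*} [TopologicalSpace X] (T : X ≃ₜ X) (n : ℤ) : X → X :=
  fun x => (T.toEquiv ^ n) x

/-- The full orbit {Tⁿ x : n ∈ ℤ} of a point. -/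
def orb {X : Type*} [TopologicalSpace X] (T : X ≃ₜ X) (x : X) : Set X :=
  Set.range fun n : ℤ => hIter T n x

/-- The orbit closure of a point. -/
def orbCl {X : Type*} [TopologicalSpace X] (T : X ≃ₜ X) (x : X) : Set X :=
  closure (orb T x)

/-- A system is minimal if it has no proper nonempty closed invariant subset. -/
def IsMinimalSys {X : Type*} [TopologicalSpace X] (T : X → X) : Prop :=
  ∀ A : Set X, IsClosed A → A.Nonempty → T '' A = A → A = Set.univ

/-- `J` is a joining of the subsystems `(K,T)` and `(L,S)`: a closed `T × S`-invariant
subset of `K ×ˢ L` projecting onto `K` and onto `L`. -/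
def IsJoiningOn {X Y : Type*} [TopologicalSpace X] [TopologicalSpace Y]
    (T : X → X) (S : Y → Y) (K : Set X) (L : Set Y) (J : Set (X × Y)) : Prop :=
  IsClosed J ∧ J ⊆ K ×ˢ L ∧ Prod.map T S '' J = J ∧
    Prod.fst '' J = K ∧ Prod.snd '' J = L

/-- The subsystems `(K,T)` and `(L,S)` are disjoint: their only joining is `K ×ˢ L`. -/
def DisjointOn {X Y : Type*} [TopologicalSpace X] [TopologicalSpace Y]
    (T : X → X) (S : Y → Y) (K : Set X) (L : Set Y) : Prop :=
  ∀ J : Set (X × Y), IsJoiningOn T S K L J → J = K ×ˢ L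

/-- `M` is a minimal subset (minimal subsystem) of (X,T). -/
def IsMinimalSubset {X : Type*} [TopologicalSpace X] (T : X ≃ₜ X) (M : Set X) : Prop :=
  IsClosed M ∧ M.Nonempty ∧ ⇑T '' M = M ∧
    ∀ B : Set X, IsClosed B → B.Nonempty → B ⊆ M → ⇑T '' B = B → B = M

/-- (a,b) is a regionally proximal pair. -/
def RPpair {X : Type*} [MetricSpace X] (T : X ≃ₜ X) (a b : X) : Prop :=
  ∃ (u v : ℕ → X) (n : ℕ → ℤ),
    Filter.Tendsto u Filter.atTop (nhds a) ∧
    Filter.Tendsto v Filter.atTop (nhds b) ∧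
    Filter.Tendsto (fun i => dist (hIter T (n i) (u i)) (hIter T (n i) (v i)))
      Filter.atTop (nhds 0)

section Aux
variable {X : Type*} [TopologicalSpace X] (T : X ≃ₜ X)

lemma hIter_add (m n : ℤ) (x : X) :
    hIter T (m + n) x = hIter T m (hIter T n x) := by
  simp [hIter, zpow_add]

lemma hIter_zero (x : X) : hIter T 0 x = x := by simp [hIter]
lemma hIter_one (x : X) : hIter T 1 x = T x := by simp [hIter]
lemma hIter_neg_one (x : X) : hIter T (-1) x = T.symm x := by
  simp [hIter, Equiv.Perm.inv_def]

lemma hIter_succ (n : ℤ) (x : X) : hIter T (n + 1) x = T (hIter T n x) := by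
  rw [add_comm, hIter_add, hIter_one]

lemma hIter_pred (n : ℤ) (x : X) : hIter T (n - 1) x = T.symm (hIter T n x) := by
  rw [sub_eq_neg_add, hIter_add, hIter_neg_one]

lemma hIter_continuous (n : ℤ) : Continuous (hIter T n) := by
  induction n using Int.induction_on with
  | zero => simpa [funext (hIter_zero T)] using continuous_id'
  | succ n ih =>
      have : (hIter T ((n : ℤ) + 1)) = ⇑T ∘ hIter T n := funext fun x => hIter_succ T n x
      rw [this]; exact T.continuous.comp ih
  | pred n ih =>
      have : (hIter T (-(n : ℤ) - 1)) = ⇑T.symm ∘ hIter T (-n) := funext fun x => hIter_pred T (-n) x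
      rw [this]; exact T.symm.continuous.comp ih

lemma hIter_cancel (n : ℤ) (x : X) : hIter T (-n) (hIter T n x) = x := by
  rw [← hIter_add, neg_add_cancel, hIter_zero]

lemma image_symm_of_image_eq {M : Set X} (hM : ⇑T '' M = M) : ⇑T.symm '' M = M := by
  conv_lhs => rw [← hM]
  ext a; simp

lemma image_hIter_eq {M : Set X} (hM : ⇑T '' M = M) (n : ℤ) : hIter T n '' M = M := by
  induction n using Int.induction_on with
  | zero => simp [funext (hIter_zero T)]
  | succ n ih =>
      rw [funext (hIter_succ T n), show (fun x => T (hIter T (n:ℤ) x)) = ⇑T ∘ hIter T (n:ℤ) from rfl,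
        Set.image_comp, ih, hM]
  | pred n ih =>
      rw [funext (hIter_pred T (-n)),
        show (fun x => T.symm (hIter T (-n:ℤ) x)) = ⇑T.symm ∘ hIter T (-n:ℤ) from rfl,
        Set.image_comp, ih, image_symm_of_image_eq T hM]

lemma mem_hIter_of_mem {M : Set X} (hM : ⇑T '' M = M) (n : ℤ) {a : X} (ha : a ∈ M) :
    hIter T n a ∈ M := by
  rw [← image_hIter_eq T hM n]; exact ⟨a, ha, rfl⟩

lemma hIter_image_open {B : Set X} (hB : IsOpen B) (n : ℤ) : IsOpen (hIter T n '' B) := by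
  have h : hIter T n '' B = hIter T (-n) ⁻¹' B := by
    refine congrFun (Set.image_eq_preimage_of_inverse ?_ ?_) B
    · intro x; exact hIter_cancel T n x
    · intro x; rw [← hIter_add, add_neg_cancel, hIter_zero]
  rw [h]; exact hB.preimage (hIter_continuous T (-n))

end Aux

section KEY
variable {X : Type*} [MetricSpace X] [CompactSpace X]

lemma key (T : X ≃ₜ X) (Xi : ℕ → Set X) (hmin : ∀ i, IsMinimalSubset T (Xi i))
    (hdense : Dense (⋃ i, Xi i))
    (hdisj : ∀ i, DisjointOn (⇑T) (⇑T) (Xi i) Set.univ)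
    (x : X) (q : ℤ) {ε : ℝ} (hε : 0 < ε) :
    ∃ (u v : X) (n : ℤ), dist u x < ε ∧ dist v (hIter T q x) < ε ∧
      dist (hIter T n u) (hIter T n v) < ε := by
  set e : ℝ := ε / 4 with he_def
  have he : 0 < e := by positivity
  -- uniform continuity of T^q
  have hTqc : UniformContinuous (hIter T q) :=
    CompactSpace.uniformContinuous_of_continuous (hIter_continuous T q)
  obtain ⟨δ₁, hδ₁, hTq⟩ := Metric.uniformContinuous_iff.mp hTqc e he
  set δ : ℝ := min δ₁ e with hδ_def
  have hδ : 0 < δ := lt_min hδ₁ he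
  -- pick a minimal point near x
  obtain ⟨m, hmU, hmd⟩ := Metric.mem_closure_iff.mp (hdense x) δ hδ
  obtain ⟨i, hmM⟩ := mem_iUnion.mp hmU
  obtain ⟨hMc, hMne, hMim, hMmin⟩ := hmin i
  set M : Set X := Xi i with hM_def
  -- the joining
  set gph : ℤ → X × X → X × X := fun n c => (hIter T n c.1, hIter T n c.2) with hgph_def
  set Cr : Set (X × X) := {c | c.1 ∈ M ∧ dist (hIter T q c.1) c.2 < e} with hCr_def
  set U : Set (X × X) := ⋃ n : ℤ, gph n '' Cr with hU_def
  set B : Set X := ⋃ m' ∈ M, Metric.ball m' e with hB_def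
  set V : Set X := ⋃ n : ℤ, hIter T n '' B with hV_def
  set J : Set (X × X) := closure U ∪ M ×ˢ Vᶜ with hJ_def
  have hJsub : J ⊆ M ×ˢ (univ : Set X) := by
    apply union_subset
    · apply closure_minimal _ (hMc.prod isClosed_univ)
      refine iUnion_subset fun n => ?_
      rintro _ ⟨c, ⟨hc1, _⟩, rfl⟩
      exact ⟨mem_hIter_of_mem T hMim n hc1, trivial⟩
    · exact prod_mono subset_rfl (subset_univ _)
  have hBopen : IsOpen B := isOpen_biUnion fun _ _ => Metric.isOpen_ball
  have hVopen : IsOpen V := isOpen_iUnion fun n => hIter_image_open T hBopen n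
  have hJclosed : IsClosed J := isClosed_closure.union (hMc.prod hVopen.isClosed_compl)
  -- invariance
  set F : (X × X) ≃ₜ (X × X) := T.prodCongr T with hF_def
  have hF : ⇑F = Prod.map ⇑T ⇑T := rfl
  have hgphF : ∀ n : ℤ, ⇑F ∘ gph n = gph (n + 1) := by
    intro n; funext c
    show (T (hIter T n c.1), T (hIter T n c.2)) = _
    rw [hgph_def]; exact Prod.ext (hIter_succ T n c.1).symm (hIter_succ T n c.2).symm
  have hUinv : ⇑F '' U = U := by
    rw [hU_def, image_iUnion]
    ext p
    simp only [mem_iUnion]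
    constructor
    · rintro ⟨n, hp⟩
      rw [← Set.image_comp, hgphF n] at hp
      exact ⟨n + 1, hp⟩
    · rintro ⟨n, hp⟩
      refine ⟨n - 1, ?_⟩
      rw [← Set.image_comp, hgphF (n - 1), sub_add_cancel]
      exact hp
  have hKinv : ⇑F '' closure U = closure U := by
    rw [F.image_closure, hUinv]
  have hVinv : ⇑T '' V = V := by
    rw [hV_def, image_iUnion]
    ext p
    simp only [mem_iUnion]
    constructor
    · rintro ⟨n, hp⟩
      rw [show ⇑T '' (hIter T n '' B) = (⇑T ∘ hIter T n) '' B from (Set.image_comp _ _ _).symm,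
        show ⇑T ∘ hIter T n = hIter T (n + 1) from funext fun y => (hIter_succ T n y).symm] at hp
      exact ⟨n + 1, hp⟩
    · rintro ⟨n, hp⟩
      refine ⟨n - 1, ?_⟩
      rw [show ⇑T '' (hIter T (n-1) '' B) = (⇑T ∘ hIter T (n-1)) '' B from (Set.image_comp _ _ _).symm,
        show ⇑T ∘ hIter T (n-1) = hIter T (n - 1 + 1) from funext fun y => (hIter_succ T (n-1) y).symm,
        sub_add_cancel]
      exact hp
  have hCinv : ⇑T '' Vᶜ = Vᶜ := by
    rw [Set.image_compl_eq T.bijective, hVinv]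
  have hJinv : Prod.map ⇑T ⇑T '' J = J := by
    rw [hJ_def, image_union, ← hF, hKinv, hF,
      show Prod.map ⇑T ⇑T '' (M ×ˢ Vᶜ) = (⇑T '' M) ×ˢ (⇑T '' Vᶜ) from
        (Set.prod_image_image_eq).symm, hMim, hCinv]
  -- J is nonempty
  obtain ⟨m₀, hm₀⟩ := hMne
  have hCrJ : Cr ⊆ J := by
    intro c hc
    apply subset_union_left
    apply subset_closure
    exact mem_iUnion.mpr ⟨0, c, hc, Prod.ext (hIter_zero T c.1) (hIter_zero T c.2)⟩
  have hJne : J.Nonempty := by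
    refine ⟨(hIter T (-q) m₀, m₀), hCrJ ⟨mem_hIter_of_mem T hMim _ hm₀, ?_⟩⟩
    show dist (hIter T q (hIter T (-q) m₀)) m₀ < e
    rw [← hIter_add, add_neg_cancel, hIter_zero, dist_self]
    exact he
  -- fst projection = M
  have hJcpt : IsCompact J := hJclosed.isCompact
  have hfstJ : Prod.fst '' J = M := by
    apply hMmin
    · exact (hJcpt.image continuous_fst).isClosed
    · exact hJne.image _
    · rintro _ ⟨p, hp, rfl⟩; exact (hJsub hp).1
    · rw [show ⇑T '' (Prod.fst '' J) = (⇑T ∘ Prod.fst) '' J from (Set.image_comp _ _ _).symm,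
        show ⇑T ∘ (Prod.fst : X × X → X) = Prod.fst ∘ Prod.map ⇑T ⇑T from rfl,
        Set.image_comp, hJinv]
  -- snd projection = univ
  have hsndJ : Prod.snd '' J = univ := by
    apply eq_univ_of_forall
    intro w
    by_cases hw : w ∈ V
    · obtain ⟨n, hn⟩ := mem_iUnion.mp hw
      obtain ⟨w', hw'B, rfl⟩ := hn
      obtain ⟨m', hm'M, hball⟩ := mem_iUnion₂.mp hw'B
      have hCr : (hIter T (-q) m', w') ∈ Cr := by
        refine ⟨mem_hIter_of_mem T hMim _ hm'M, ?_⟩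
        show dist (hIter T q (hIter T (-q) m')) w' < e
        rw [← hIter_add, add_neg_cancel, hIter_zero]
        rw [Metric.mem_ball] at hball
        rw [dist_comm]; exact hball
      refine ⟨gph n (hIter T (-q) m', w'), ?_, rfl⟩
      apply subset_union_left
      apply subset_closure
      exact mem_iUnion.mpr ⟨n, _, hCr, rfl⟩
    · exact ⟨(m₀, w), Or.inr ⟨hm₀, hw⟩, rfl⟩
  have hJeq : J = M ×ˢ (univ : Set X) :=
    hdisj i J ⟨hJclosed, hJsub, hJinv, hfstJ, hsndJ⟩
  -- x ∈ V
  have hxV : x ∈ V := by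
    refine mem_iUnion.mpr ⟨0, x, ?_, hIter_zero T x⟩
    refine mem_iUnion₂.mpr ⟨m, hmM, Metric.mem_ball.mpr ?_⟩
    exact lt_of_lt_of_le hmd (min_le_right _ _)
  -- (m, x) ∈ closure U
  have hmxJ : (m, x) ∈ J := by rw [hJeq]; exact ⟨hmM, trivial⟩
  have hmxK : (m, x) ∈ closure U := by
    rcases hmxJ with h | h
    · exact h
    · exact absurd hxV h.2
  -- unpack
  set η : ℝ := min δ₁ e with hη_def
  have hη : 0 < η := lt_min hδ₁ he
  obtain ⟨c, hcU, hcd⟩ := Metric.mem_closure_iff.mp hmxK η hη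
  obtain ⟨n, hc⟩ := mem_iUnion.mp hcU
  obtain ⟨⟨p, r⟩, ⟨hpM, hpr⟩, rfl⟩ := hc
  rw [show gph n (p, r) = (hIter T n p, hIter T n r) from rfl, Prod.dist_eq] at hcd
  have hd1 : dist m (hIter T n p) < η := lt_of_le_of_lt (le_max_left _ _) hcd
  have hd2 : dist x (hIter T n r) < η := lt_of_le_of_lt (le_max_right _ _) hcd
  refine ⟨hIter T n r, hIter T (q + n) p, -n, ?_, ?_, ?_⟩
  · rw [dist_comm]
    calc dist x (hIter T n r) < η := hd2
    _ ≤ e := min_le_right _ _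
    _ < ε := by rw [he_def]; linarith
  · have hv : hIter T (q + n) p = hIter T q (hIter T n p) := hIter_add T q n p
    have h1 : dist (hIter T q (hIter T n p)) (hIter T q m) < e := by
      refine hTq ?_
      rw [dist_comm]
      exact lt_of_lt_of_le hd1 (min_le_left _ _)
    have h2 : dist (hIter T q m) (hIter T q x) < e := by
      refine hTq ?_
      rw [dist_comm]
      exact lt_of_lt_of_le hmd (min_le_left _ _)
    calc dist (hIter T (q + n) p) (hIter T q x)
        ≤ dist (hIter T (q + n) p) (hIter T q m) + dist (hIter T q m) (hIter T q x) :=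
          dist_triangle _ _ _
      _ < e + e := by rw [hv]; exact add_lt_add h1 h2
      _ ≤ ε := by rw [he_def]; linarith
  · rw [hIter_cancel, ← hIter_add, show -n + (q + n) = q by ring, dist_comm]
    calc dist (hIter T q p) r < e := hpr
    _ < ε := by rw [he_def]; linarith
end KEY

section Main
variable {X : Type*} [TopologicalSpace X]

lemma phi_hIter {X Z : Type*} [TopologicalSpace X] [TopologicalSpace Z]
    (T : X ≃ₜ X) (R : Z ≃ₜ Z) (φ : X → Z) (hφT : ∀ x, φ (T x) = R (φ x)) :
    ∀ (n : ℤ) (x : X), φ (hIter T n x) = hIter R n (φ x) := by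
  have hsymm : ∀ x, φ (T.symm x) = R.symm (φ x) := by
    intro x
    have h := hφT (T.symm x)
    rw [T.apply_symm_apply] at h
    rw [h, R.symm_apply_apply]
  intro n
  induction n using Int.induction_on with
  | zero => intro x; rw [hIter_zero, hIter_zero]
  | succ k ih =>
      intro x
      rw [hIter_succ, hφT, ih, hIter_succ]
  | pred k ih =>
      intro x
      rw [show (-(k:ℤ) - 1) = (-(k:ℤ)) - 1 from rfl, hIter_pred, hsymm, ih, hIter_pred]

end Main

/-- Suppose (X,T) admits minimal subsystems Xᵢ (i ∈ ℕ) with dense union, each disjoint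
from (X,T). Then for every x, cl O(x,T) × cl O(x,T) ⊆ Q(X); consequently the maximal
equicontinuous factor of (X,T) consists solely of fixed points (equivalently, every
equicontinuous factor of (X,T) consists of fixed points). -/
theorem stmt_19 {X : Type u} [MetricSpace X] [CompactSpace X] (T : X ≃ₜ X)
    (Xi : ℕ → Set X) (hmin : ∀ i, IsMinimalSubset T (Xi i))
    (hdense : Dense (⋃ i, Xi i))
    (hdisj : ∀ i, DisjointOn (⇑T) (⇑T) (Xi i) Set.univ) :
    (∀ x : X, orbCl T x ×ˢ orbCl T x ⊆ {p : X × X | RPpair T p.1 p.2}) ∧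
    (∀ (Z : Type u) [MetricSpace Z] [CompactSpace Z] (R : Z ≃ₜ Z) (φ : X → Z),
      Continuous φ → Function.Surjective φ → (∀ x, φ (T x) = R (φ x)) →
      (∀ ε > (0 : ℝ), ∃ δ > (0 : ℝ), ∀ z w : Z, dist z w < δ →
        ∀ n : ℤ, dist (hIter R n z) (hIter R n w) < ε) →
      ∀ z : Z, R z = z) := by
  -- the approximate regional-proximality relation
  set Q' : Set (X × X) :=
    {p | ∀ ε > (0:ℝ), ∃ (u v : X) (n : ℤ), dist u p.1 < ε ∧ dist v p.2 < ε ∧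
      dist (hIter T n u) (hIter T n v) < ε} with hQ'_def
  have hQ'closed : IsClosed Q' := by
    rw [← closure_subset_iff_isClosed]
    intro p hp ε hε
    obtain ⟨p', hp'Q, hpd⟩ := Metric.mem_closure_iff.mp hp (ε/2) (by positivity)
    obtain ⟨u, v, n, h1, h2, h3⟩ := hp'Q (ε/2) (by positivity)
    rw [Prod.dist_eq] at hpd
    have hc1 : dist p.1 p'.1 < ε/2 := lt_of_le_of_lt (le_max_left _ _) hpd
    have hc2 : dist p.2 p'.2 < ε/2 := lt_of_le_of_lt (le_max_right _ _) hpd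
    refine ⟨u, v, n, ?_, ?_, by linarith⟩
    · calc dist u p.1 ≤ dist u p'.1 + dist p'.1 p.1 := dist_triangle _ _ _
        _ < ε/2 + ε/2 := by rw [dist_comm p'.1 p.1]; exact add_lt_add h1 hc1
        _ = ε := by ring
    · calc dist v p.2 ≤ dist v p'.2 + dist p'.2 p.2 := dist_triangle _ _ _
        _ < ε/2 + ε/2 := by rw [dist_comm p'.2 p.2]; exact add_lt_add h2 hc2
        _ = ε := by ring
  have horb : ∀ x : X, orb T x ×ˢ orb T x ⊆ Q' := by
    rintro x ⟨a, b⟩ ⟨⟨s, rfl⟩, ⟨t, rfl⟩⟩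
    intro ε hε
    obtain ⟨u, v, n, h1, h2, h3⟩ :=
      key T Xi hmin hdense hdisj (hIter T s x) (t - s) hε
    refine ⟨u, v, n, h1, ?_, h3⟩
    rwa [← hIter_add, sub_add_cancel] at h2
  have part1 : ∀ x : X, orbCl T x ×ˢ orbCl T x ⊆ {p : X × X | RPpair T p.1 p.2} := by
    intro x
    have hsub : orbCl T x ×ˢ orbCl T x ⊆ Q' := by
      rw [orbCl, ← closure_prod_eq]
      exact closure_minimal (horb x) hQ'closed
    intro p hp
    have hpQ := hsub hp
    have hsel : ∀ k : ℕ, ∃ (u v : X) (n : ℤ), dist u p.1 < 1/(k+1) ∧ dist v p.2 < 1/(k+1) ∧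
        dist (hIter T n u) (hIter T n v) < 1/(k+1) := by
      intro k
      exact hpQ (1/(k+1)) (by positivity)
    choose u v n h1 h2 h3 using hsel
    have hmono : ∀ N k : ℕ, N ≤ k → (1:ℝ)/(k+1) ≤ 1/(N+1) := by
      intro N k hNk
      apply one_div_le_one_div_of_le (by positivity)
      have : (N:ℝ) ≤ k := by exact_mod_cast hNk
      linarith
    refine ⟨u, v, n, ?_, ?_, ?_⟩
    · rw [Metric.tendsto_atTop]
      intro ε hε
      obtain ⟨N, hN⟩ := exists_nat_one_div_lt hε
      exact ⟨N, fun k hk => lt_of_lt_of_le (h1 k) (le_of_lt (lt_of_le_of_lt (hmono N k hk) hN))⟩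
    · rw [Metric.tendsto_atTop]
      intro ε hε
      obtain ⟨N, hN⟩ := exists_nat_one_div_lt hε
      exact ⟨N, fun k hk => lt_of_lt_of_le (h2 k) (le_of_lt (lt_of_le_of_lt (hmono N k hk) hN))⟩
    · apply squeeze_zero (fun k => dist_nonneg) (fun k => le_of_lt (h3 k))
      exact tendsto_one_div_add_atTop_nhds_zero_nat
  refine ⟨part1, ?_⟩
  intro Z _ _ R φ hφc hφs hφT hequi z
  obtain ⟨x, rfl⟩ := hφs z
  rw [← hφT x]
  have hx : (x, T x) ∈ orbCl T x ×ˢ orbCl T x :=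
    ⟨subset_closure ⟨0, hIter_zero T x⟩, subset_closure ⟨1, hIter_one T x⟩⟩
  obtain ⟨u, v, n, hu, hv, hd⟩ := part1 x hx
  have key2 : ∀ ε > (0:ℝ), dist (φ x) (φ (T x)) ≤ ε := by
    intro ε hε
    obtain ⟨δZ, hδZ, hZ⟩ := hequi ε hε
    have hφu : UniformContinuous φ := CompactSpace.uniformContinuous_of_continuous hφc
    obtain ⟨δ', hδ', hφ'⟩ := Metric.uniformContinuous_iff.mp hφu δZ hδZ
    have hev : ∀ᶠ i in atTop, dist (hIter T (n i) (u i)) (hIter T (n i) (v i)) < δ' :=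
      hd.eventually (gt_mem_nhds hδ')
    have hev2 : ∀ᶠ i in atTop, dist (φ (u i)) (φ (v i)) ≤ ε := by
      filter_upwards [hev] with i hi
      have h1 : dist (φ (hIter T (n i) (u i))) (φ (hIter T (n i) (v i))) < δZ := hφ' hi
      have h2 := hZ _ _ h1 (-(n i))
      have e1 : hIter R (-(n i)) (φ (hIter T (n i) (u i))) = φ (u i) := by
        rw [phi_hIter T R φ hφT, hIter_cancel]
      have e2 : hIter R (-(n i)) (φ (hIter T (n i) (v i))) = φ (v i) := by
        rw [phi_hIter T R φ hφT, hIter_cancel]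
      rw [e1, e2] at h2
      exact le_of_lt h2
    have hlim : Tendsto (fun i => dist (φ (u i)) (φ (v i))) atTop
        (nhds (dist (φ x) (φ (T x)))) :=
      ((hφc.tendsto x).comp hu).dist ((hφc.tendsto (T x)).comp hv)
    exact le_of_tendsto hlim hev2
  have hzero : dist (φ x) (φ (T x)) = 0 := by
    by_contra h
    have hpos : 0 < dist (φ x) (φ (T x)) := lt_of_le_of_ne dist_nonneg (Ne.symm h)
    have := key2 (dist (φ x) (φ (T x)) / 2) (by linarith)
    linarith
  exact (dist_eq_zero.mp hzero).symm
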